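/- Let T be a Cartesian tree on m nodes whose root is the node at in-order position k. Then the number of distinct Cartesian trees obtainable by a swap at position k-1 equals LMP(right(T)) + 1, and the number obtainable by a swap at position k equals RMP(left(T)) + 1, where LMP and RMP denote the lengths of the leftmost and rightmost paths. -/

import Mathlib

/-- Binary tree shapes (Cartesian trees are determined by their shape). -/
inductive BTree : Type
  | nil : BTree
  | node : BTree → BTree → BTree
deriving DecidableEq

namespace BTree

/-- Number of nodes. -/
def size : BTree → ℕ
  | nil => 0
  | node l r => size l + size r + 1

/-- Length of the leftmost path. -/
def LMP : BTree → ℕ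
  | nil => 0
  | node l _ => LMP l + 1

/-- Length of the rightmost path. -/
def RMP : BTree → ℕ
  | nil => 0
  | node _ r => RMP r + 1

end BTree

/-- Minimum value of a list (0 for the empty list). -/
def listMin : List ℤ → ℤ
  | [] => 0
  | a :: t => t.foldl min a

/-- Index (0-based) of the minimum of a list. -/
def minIdx (l : List ℤ) : ℕ := l.idxOf (listMin l)

/-- Cartesian tree of a list, with fuel for termination. -/
def ctreeAux : ℕ → List ℤ → BTree
  | 0, _ => .nil
  | _ + 1, [] => .nil
  | n + 1, a :: t =>
      let g := minIdx (a :: t)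
      .node (ctreeAux n ((a :: t).take g)) (ctreeAux n ((a :: t).drop (g + 1)))

/-- Cartesian tree of a list: the root is the position of the minimum,
its subtrees are the Cartesian trees of the prefix and suffix around it. -/
def ctreeL (l : List ℤ) : BTree := ctreeAux l.length l

/-- The factor x[a..b] (1-based positions) of a sequence, as a list. -/
def seqList (x : ℕ → ℤ) (a b : ℕ) : List ℤ :=
  (List.range (b + 1 - a)).map (fun k => x (a + k))

/-- Cartesian tree of the sequence x[1..m]. -/
def ctreeOf (m : ℕ) (x : ℕ → ℤ) : BTree := ctreeL (seqList x 1 m)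

/-- Positions j < h (1-based) with x[j] < x[h]. -/
def PDset (x : ℕ → ℤ) (h : ℕ) : Finset ℕ :=
  (Finset.Ico 1 h).filter (fun j => x j < x h)

/-- Parent-distance table: PD_x[h] = h - max{j < h : x[j] < x[h]}, 0 if no such j. -/
def PD (x : ℕ → ℤ) (h : ℕ) : ℕ :=
  if hs : (PDset x h).Nonempty then h - (PDset x h).max' hs else 0

/-- Positions h < j ≤ m with x[j] < x[h]. -/
def RPDset (m : ℕ) (x : ℕ → ℤ) (h : ℕ) : Finset ℕ :=
  (Finset.Ioc h m).filter (fun j => x j < x h)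

/-- Reverse parent-distance table: RPD_x[h] = min{j > h : x[j] < x[h]} - h, 0 if no such j. -/
def RPD (m : ℕ) (x : ℕ → ℤ) (h : ℕ) : ℕ :=
  if hs : (RPDset m x h).Nonempty then (RPDset m x h).min' hs - h else 0

/-- Referent of h: the smallest position j > h with x[j] < x[h], or -1 if none. -/
def refD (m : ℕ) (x : ℕ → ℤ) (h : ℕ) : ℤ :=
  if hs : (RPDset m x h).Nonempty then ((RPDset m x h).min' hs : ℤ) else -1

/-- Skipped-number table: SN_x[h] is the number of nodes on the rightmost path of the
left subtree of node h in C(x), i.e. the number of positions whose referent is h. -/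
def SN (m : ℕ) (x : ℕ → ℤ) (h : ℕ) : ℕ :=
  ((Finset.Ico 1 h).filter (fun j => refD m x j = (h : ℤ))).card

/-- The swap τ(x,i): exchange the entries at positions i and i+1. -/
def swapAt (x : ℕ → ℤ) (i : ℕ) : ℕ → ℤ :=
  fun j => if j = i then x (i + 1) else if j = i + 1 then x i else x j

/-- ng(T,i): the Cartesian trees obtained from a sequence realizing T by one swap
at position i (valid positions are 1 ≤ i ≤ m-1). -/
def ngi (m : ℕ) (T : BTree) (i : ℕ) : Set BTree :=
  { S | 1 ≤ i ∧ i + 1 ≤ m ∧ ∃ x : ℕ → ℤ, Set.InjOn x (Set.Icc 1 m) ∧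
        ctreeOf m x = T ∧ S = ctreeOf m (swapAt x i) }

/-- ng(T): the swap neighbourhood of T. -/
def ng (m : ℕ) (T : BTree) : Set BTree := ⋃ i, ngi m T i

/-- Number of permutations of {1,...,n} whose Cartesian tree is A. -/
noncomputable def permCount (n : ℕ) (A : BTree) : ℕ :=
  Set.ncard { σ : Equiv.Perm (Fin n) |
    ctreeL (List.ofFn (fun k : Fin n => ((σ k : ℕ) : ℤ) + 1)) = A }

/-- Product over all nodes t of A of the size of the subtree rooted at t. -/
def hookProd : BTree → ℕ
  | .nil => 1
  | .node l r => (BTree.node l r).size * hookProd l * hookProd r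


section Basics
variable {l l1 l2 : List ℤ} {a v : ℤ}

lemma listMin_aux : ∀ (t : List ℤ) (a : ℤ),
    t.foldl min a ∈ a :: t ∧ ∀ b ∈ a :: t, t.foldl min a ≤ b := by
  intro t
  induction t with
  | nil => intro a; simp
  | cons b t ih =>
    intro a
    have h := ih (min a b)
    constructor
    · rcases List.mem_cons.1 h.1 with h1 | h1
      · rcases min_cases a b with ⟨h2, _⟩ | ⟨h2, _⟩ <;>
          simp only [List.foldl_cons] <;> rw [h1, h2] <;> simp
      · simp [List.foldl_cons, h1]
    · intro c hc
      simp only [List.foldl_cons]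
      have hm : List.foldl min (a ⊓ b) t ≤ a ⊓ b := h.2 (a ⊓ b) (by simp)
      rcases List.mem_cons.1 hc with rfl | hc
      · exact le_trans hm (min_le_left _ _)
      rcases List.mem_cons.1 hc with rfl | hc
      · exact le_trans hm (min_le_right _ _)
      · exact h.2 _ (by simp [hc])

lemma listMin_mem (h : l ≠ []) : listMin l ∈ l := by
  match l, h with
  | a :: t, _ => exact (listMin_aux t a).1

lemma listMin_le (h : l ≠ []) : ∀ b ∈ l, listMin l ≤ b := by
  match l, h with
  | a :: t, _ => exact (listMin_aux t a).2

lemma listMin_append (h1 : ∀ b ∈ l1, a < b) (h2 : ∀ b ∈ l2, a < b) :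
    listMin (l1 ++ a :: l2) = a := by
  have hne : l1 ++ a :: l2 ≠ [] := by simp
  have hmem : listMin (l1 ++ a :: l2) ∈ l1 ++ a :: l2 := listMin_mem hne
  have hle : listMin (l1 ++ a :: l2) ≤ a := listMin_le hne a (by simp)
  rcases List.mem_append.1 hmem with h | h
  · exact absurd (h1 _ h) (not_lt.2 hle)
  · rcases List.mem_cons.1 h with h | h
    · exact h
    · exact absurd (h2 _ h) (not_lt.2 hle)

lemma indexOf_append (hnotmem : a ∉ l1) :
    (l1 ++ a :: l2).idxOf a = l1.length := by
  induction l1 with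
  | nil => simp
  | cons b t ih =>
    have hba : (b == a) = false := by
      simp only [beq_eq_false_iff_ne]; rintro rfl; simp at hnotmem
    simp only [List.cons_append, List.idxOf_cons, hba, cond_false, List.length_cons]
    rw [ih (fun h => hnotmem (List.mem_cons_of_mem _ h))]

lemma minIdx_append (h1 : ∀ b ∈ l1, a < b) (h2 : ∀ b ∈ l2, a < b) :
    minIdx (l1 ++ a :: l2) = l1.length := by
  rw [minIdx, listMin_append h1 h2]
  exact indexOf_append (fun h => absurd (h1 _ h) (lt_irrefl a))

end Basics
section CtreeBasics
variable {l l1 l2 : List ℤ} {a v : ℤ}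

lemma ctreeAux_nil : ∀ n, ctreeAux n ([] : List ℤ) = .nil
  | 0 => rfl
  | _ + 1 => rfl

lemma ctreeAux_cons (n : ℕ) (a : ℤ) (t : List ℤ) :
    ctreeAux (n + 1) (a :: t) =
      .node (ctreeAux n ((a :: t).take (minIdx (a :: t))))
            (ctreeAux n ((a :: t).drop (minIdx (a :: t) + 1))) := rfl

lemma minIdx_lt_length (h : l ≠ []) : minIdx l < l.length :=
  List.idxOf_lt_length_iff.2 (listMin_mem h)

lemma ctreeAux_eq_ctreeL : ∀ (N : ℕ) (l : List ℤ), l.length ≤ N →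
    ∀ n, l.length ≤ n → ctreeAux n l = ctreeL l := by
  intro N
  induction N with
  | zero =>
    intro l hl n _
    rw [List.length_eq_zero_iff.1 (Nat.le_zero.1 hl)]
    rw [ctreeL, ctreeAux_nil, ctreeAux_nil]
  | succ N ih =>
    intro l hl n hn
    match l with
    | [] => rw [ctreeL, ctreeAux_nil, ctreeAux_nil]
    | a :: t =>
      match n, hn with
      | n + 1, hn =>
        have hg : minIdx (a :: t) < (a :: t).length := minIdx_lt_length (by simp)
        have hlt : ((a :: t).take (minIdx (a :: t))).length = minIdx (a :: t) := by
          rw [List.length_take]; simp at hg ⊢; omega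
        have hld : ((a :: t).drop (minIdx (a :: t) + 1)).length = t.length - minIdx (a :: t) := by
          rw [List.length_drop]; simp
        simp only [List.length_cons] at hl hg hn
        rw [ctreeL, List.length_cons, ctreeAux_cons, ctreeAux_cons]
        rw [ih _ (by omega) _ (by omega), ih _ (by omega) _ (by omega),
            ih _ (by omega) _ (by omega), ih _ (by omega) _ (by omega)]

lemma ctreeL_eq_node (h : l ≠ []) :
    ctreeL l = .node (ctreeL (l.take (minIdx l))) (ctreeL (l.drop (minIdx l + 1))) := by
  match l, h with
  | a :: t, _ =>
    have hg : minIdx (a :: t) < (a :: t).length := minIdx_lt_length (by simp)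
    rw [ctreeL, show (a :: t).length = t.length + 1 from rfl, ctreeAux_cons]
    rw [ctreeAux_eq_ctreeL (t.length) _ (by rw [List.length_take]; simp at hg ⊢; omega) _
          (by rw [List.length_take]; simp at hg ⊢; omega),
        ctreeAux_eq_ctreeL (t.length) _ (by rw [List.length_drop]; simp) _
          (by rw [List.length_drop]; simp)]

lemma ctreeL_split (h1 : ∀ b ∈ l1, a < b) (h2 : ∀ b ∈ l2, a < b) :
    ctreeL (l1 ++ a :: l2) = .node (ctreeL l1) (ctreeL l2) := by
  have hg := minIdx_append h1 h2
  rw [ctreeL_eq_node (by simp), hg]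
  congr 1
  · rw [List.take_left']; rfl
  · congr 1
    rw [show l1.length + 1 = (l1 ++ [a]).length by simp,
        show l1 ++ a :: l2 = (l1 ++ [a]) ++ l2 by simp,
        List.drop_left]

lemma ctreeL_nil : ctreeL ([] : List ℤ) = .nil := rfl

lemma ctreeL_singleton (a : ℤ) : ctreeL [a] = .node .nil .nil := by
  have := ctreeL_split (l1 := []) (l2 := []) (a := a) (by simp) (by simp)
  simpa [ctreeL_nil] using this

lemma size_ctreeL : ∀ (N : ℕ) (l : List ℤ), l.length ≤ N → (ctreeL l).size = l.length := by
  intro N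
  induction N with
  | zero =>
    intro l hl
    rw [List.length_eq_zero_iff.1 (Nat.le_zero.1 hl), ctreeL_nil]; rfl
  | succ N ih =>
    intro l hl
    rcases eq_or_ne l [] with rfl | hne
    · rw [ctreeL_nil]; rfl
    · have hg : minIdx l < l.length := minIdx_lt_length hne
      have h0 : 0 < l.length := List.length_pos_iff.2 hne
      rw [ctreeL_eq_node hne, BTree.size,
          ih _ (by rw [List.length_take]; omega),
          ih _ (by rw [List.length_drop]; omega),
          List.length_take, List.length_drop]
      omega

lemma size_ctreeL' (l : List ℤ) : (ctreeL l).size = l.length := size_ctreeL l.length l le_rfl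

lemma ctreeL_ne_nil (h : l ≠ []) : ctreeL l ≠ .nil := by
  intro hc
  have := size_ctreeL' l
  rw [hc] at this
  exact h (List.length_eq_zero_iff.1 (by rw [BTree.size] at this; omega))

end CtreeBasics
section MapInv
variable {l : List ℤ} {a v : ℤ} {f : ℤ → ℤ}

lemma foldl_min_map (hf : Monotone f) : ∀ (t : List ℤ) (a : ℤ),
    (t.map f).foldl min (f a) = f (t.foldl min a) := by
  intro t
  induction t with
  | nil => intro a; rfl
  | cons b t ih =>
    intro a
    simp only [List.map_cons, List.foldl_cons]
    rw [← Monotone.map_min hf, ih]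

lemma listMin_map (hf : Monotone f) (h : l ≠ []) : listMin (l.map f) = f (listMin l) := by
  match l, h with
  | a :: t, _ => exact foldl_min_map hf t a

lemma indexOf_map (hf : Function.Injective f) : ∀ (l : List ℤ) (a : ℤ),
    (l.map f).idxOf (f a) = l.idxOf a := by
  intro l a
  induction l with
  | nil => rfl
  | cons b t ih =>
    simp only [List.map_cons, List.idxOf_cons]
    have : (f b == f a) = (b == a) := by
      rcases eq_or_ne b a with rfl | hne
      · simp
      · rw [beq_eq_false_iff_ne.2 hne, beq_eq_false_iff_ne.2 (fun h => hne (hf h))]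
    rw [this, ih]

lemma minIdx_map (hf : StrictMono f) (h : l ≠ []) : minIdx (l.map f) = minIdx l := by
  rw [minIdx, minIdx, listMin_map hf.monotone h, indexOf_map hf.injective]

lemma ctreeL_map_aux (hf : StrictMono f) : ∀ (N : ℕ) (l : List ℤ), l.length ≤ N →
    ctreeL (l.map f) = ctreeL l := by
  intro N
  induction N with
  | zero =>
    intro l hl
    rw [List.length_eq_zero_iff.1 (Nat.le_zero.1 hl)]; rfl
  | succ N ih =>
    intro l hl
    rcases eq_or_ne l [] with rfl | hne
    · rfl
    · have hg : minIdx l < l.length := minIdx_lt_length hne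
      have h0 : 0 < l.length := List.length_pos_iff.2 hne
      have hmne : l.map f ≠ [] := by simp [hne]
      rw [ctreeL_eq_node hne, ctreeL_eq_node hmne, minIdx_map hf hne,
          ← List.map_take, ← List.map_drop,
          ih _ (by rw [List.length_take]; omega),
          ih _ (by rw [List.length_drop]; omega)]

lemma ctreeL_map (hf : StrictMono f) (l : List ℤ) : ctreeL (l.map f) = ctreeL l :=
  ctreeL_map_aux hf l.length l le_rfl

end MapInv
section MinFacts
variable {l : List ℤ} {a v : ℤ}

lemma minIdx_getElem (hne : l ≠ []) :
    l[minIdx l]'(minIdx_lt_length hne) = listMin l :=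
  List.getElem_idxOf (minIdx_lt_length hne)

lemma take_drop_decomp (hne : l ≠ []) :
    l = l.take (minIdx l) ++ listMin l :: l.drop (minIdx l + 1) := by
  conv_lhs => rw [← List.take_append_drop (minIdx l) l]
  congr 1
  rw [← minIdx_getElem hne]
  exact (List.cons_getElem_drop_succ (h := minIdx_lt_length hne)).symm

lemma min_lt_of_mem_take (hnd : l.Nodup) (hne : l ≠ []) :
    ∀ b ∈ l.take (minIdx l), listMin l < b := by
  intro b hb
  have hble : listMin l ≤ b := listMin_le hne b (List.take_subset _ _ hb)
  rcases lt_or_eq_of_le hble with h | h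
  · exact h
  · exfalso
    rw [take_drop_decomp hne] at hnd
    have := (List.nodup_append.1 hnd).2.2
    exact this b hb _ List.mem_cons_self h.symm

lemma min_lt_of_mem_drop (hnd : l.Nodup) (hne : l ≠ []) :
    ∀ b ∈ l.drop (minIdx l + 1), listMin l < b := by
  intro b hb
  have hble : listMin l ≤ b := listMin_le hne b (List.drop_subset _ _ hb)
  rcases lt_or_eq_of_le hble with h | h
  · exact h
  · exfalso
    rw [take_drop_decomp hne] at hnd
    have := ((List.nodup_append.1 hnd).2.1)
    rw [List.nodup_cons] at this
    exact this.1 (h ▸ hb)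

end MinFacts

/-- Mirror image of a binary tree. -/
def BTree.mirror : BTree → BTree
  | .nil => .nil
  | .node a b => .node b.mirror a.mirror

@[simp] lemma BTree.mirror_mirror (T : BTree) : T.mirror.mirror = T := by
  induction T with
  | nil => rfl
  | node a b iha ihb => rw [mirror, mirror, iha, ihb]

@[simp] lemma BTree.size_mirror (T : BTree) : T.mirror.size = T.size := by
  induction T with
  | nil => rfl
  | node a b iha ihb => rw [mirror, size, size, iha, ihb]; omega

@[simp] lemma BTree.LMP_mirror (T : BTree) : T.mirror.LMP = T.RMP := by
  induction T with
  | nil => rfl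
  | node a b iha ihb => rw [mirror, LMP, RMP, ihb]

lemma BTree.mirror_injective : Function.Injective BTree.mirror :=
  Function.LeftInverse.injective BTree.mirror_mirror

lemma ctreeL_reverse_aux : ∀ (N : ℕ) (l : List ℤ), l.length ≤ N → l.Nodup →
    ctreeL l.reverse = (ctreeL l).mirror := by
  intro N
  induction N with
  | zero =>
    intro l hl _
    rw [List.length_eq_zero_iff.1 (Nat.le_zero.1 hl)]; rfl
  | succ N ih =>
    intro l hl hnd
    rcases eq_or_ne l [] with rfl | hne
    · rfl
    · have hg : minIdx l < l.length := minIdx_lt_length hne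
      have h0 : 0 < l.length := List.length_pos_iff.2 hne
      have hdec := take_drop_decomp hne
      have hrev : l.reverse = (l.drop (minIdx l + 1)).reverse ++
          listMin l :: (l.take (minIdx l)).reverse := by
        conv_lhs => rw [hdec]
        rw [List.reverse_append, List.reverse_cons, List.append_assoc]
        simp
      rw [hrev, ctreeL_split
            (fun b hb => min_lt_of_mem_drop hnd hne b (List.mem_reverse.1 hb))
            (fun b hb => min_lt_of_mem_take hnd hne b (List.mem_reverse.1 hb))]
      conv_rhs => rw [ctreeL_eq_node hne]
      rw [BTree.mirror]
      have hndt : (l.take (minIdx l)).Nodup := hnd.sublist (List.take_sublist _ _)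
      have hndd : (l.drop (minIdx l + 1)).Nodup := hnd.sublist (List.drop_sublist _ _)
      rw [ih _ (by rw [List.length_take]; omega) hndt,
          ih _ (by rw [List.length_drop]; omega) hndd]

lemma ctreeL_reverse {l : List ℤ} (hnd : l.Nodup) :
    ctreeL l.reverse = (ctreeL l).mirror := ctreeL_reverse_aux l.length l le_rfl hnd
/-- Remove the last in-order node. -/
def BTree.delLast : BTree → BTree
  | .nil => .nil
  | .node l .nil => l
  | .node l (.node r1 r2) => .node l (BTree.delLast (.node r1 r2))

lemma BTree.delLast_node {X Y : BTree} (h : Y ≠ .nil) :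
    BTree.delLast (.node X Y) = .node X Y.delLast := by
  cases Y with
  | nil => exact absurd rfl h
  | node a b => rfl

lemma ctreeL_dropLast_aux : ∀ (N : ℕ) (l : List ℤ), l.length ≤ N → l.Nodup → l ≠ [] →
    ctreeL l.dropLast = (ctreeL l).delLast := by
  intro N
  induction N with
  | zero => intro l hl _ hne; exact absurd (List.length_eq_zero_iff.1 (Nat.le_zero.1 hl)) hne
  | succ N ih =>
    intro l hl hnd hne
    have hg : minIdx l < l.length := minIdx_lt_length hne
    have h0 : 0 < l.length := List.length_pos_iff.2 hne
    have hdec := take_drop_decomp hne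
    set A := l.take (minIdx l) with hA
    set B := l.drop (minIdx l + 1) with hB
    have hctree : ctreeL l = .node (ctreeL A) (ctreeL B) := ctreeL_eq_node hne
    rcases eq_or_ne B [] with hBnil | hBne
    · rw [hctree, hBnil, ctreeL_nil]
      conv_lhs => rw [hdec, hBnil, List.dropLast_concat]
      rfl
    · conv_lhs => rw [hdec, List.dropLast_append_cons]
      obtain ⟨c, t, hct⟩ := List.exists_cons_of_ne_nil hBne
      rw [show (listMin l :: B).dropLast = listMin l :: B.dropLast by rw [hct]; rfl]
      rw [ctreeL_split (min_lt_of_mem_take hnd hne)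
            (fun b hb => min_lt_of_mem_drop hnd hne b (List.dropLast_subset _ hb))]
      have hBnd : B.Nodup := hnd.sublist (List.drop_sublist _ _)
      have hBlen : B.length ≤ N := by rw [hB, List.length_drop]; omega
      rw [ih _ hBlen hBnd hBne, hctree,
          BTree.delLast_node (ctreeL_ne_nil hBne)]

lemma ctreeL_dropLast {l : List ℤ} (hnd : l.Nodup) (hne : l ≠ []) :
    ctreeL l.dropLast = (ctreeL l).delLast := ctreeL_dropLast_aux l.length l le_rfl hnd hne

/-- Tree obtained by inserting a new value in front, cutting the leftmost path at depth j. -/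
def cutL : ℕ → BTree → BTree
  | 0, R => .node .nil R
  | _ + 1, .nil => .node .nil .nil
  | j + 1, .node A B => .node (cutL j A) B

lemma LMP_cutL : ∀ (j : ℕ) (R : BTree), j ≤ R.LMP → (cutL j R).LMP = j + 1 := by
  intro j
  induction j with
  | zero => intro R _; rfl
  | succ j ih =>
    intro R hj
    cases R with
    | nil => simp [BTree.LMP] at hj
    | node A B =>
      rw [cutL, BTree.LMP, ih A (by rw [BTree.LMP] at hj; omega)]

lemma cutL_exists_aux : ∀ (N : ℕ) (l : List ℤ) (v : ℤ), l.length ≤ N → l.Nodup → v ∉ l →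
    ∃ j ≤ (ctreeL l).LMP, ctreeL (v :: l) = cutL j (ctreeL l) := by
  intro N
  induction N with
  | zero =>
    intro l v hl _ _
    rw [List.length_eq_zero_iff.1 (Nat.le_zero.1 hl)]
    exact ⟨0, le_rfl, by rw [ctreeL_singleton]; rfl⟩
  | succ N ih =>
    intro l v hl hnd hv
    rcases eq_or_ne l [] with rfl | hne
    · exact ⟨0, le_rfl, by rw [ctreeL_singleton]; rfl⟩
    have hg : minIdx l < l.length := minIdx_lt_length hne
    have h0 : 0 < l.length := List.length_pos_iff.2 hne
    have hdec := take_drop_decomp hne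
    set A := l.take (minIdx l) with hA
    set B := l.drop (minIdx l + 1) with hB
    have hctree : ctreeL l = .node (ctreeL A) (ctreeL B) := ctreeL_eq_node hne
    have havne : listMin l ≠ v := fun h => hv (h ▸ listMin_mem hne)
    rcases lt_or_gt_of_ne havne with hlt | hgt
    · -- min < v : v cuts deeper
      have hsplit : ctreeL (v :: l) = .node (ctreeL (v :: A)) (ctreeL B) := by
        conv_lhs => rw [hdec, show v :: (A ++ listMin l :: B) = (v :: A) ++ listMin l :: B from rfl]
        exact ctreeL_split
          (by intro b hb
              rcases List.mem_cons.1 hb with rfl | hb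
              · exact hlt
              · exact min_lt_of_mem_take hnd hne b hb)
          (min_lt_of_mem_drop hnd hne)
      have hvA : v ∉ A := fun h => hv (List.take_subset _ _ h)
      have hAnd : A.Nodup := hnd.sublist (List.take_sublist _ _)
      have hAlen : A.length ≤ N := by rw [hA, List.length_take]; omega
      obtain ⟨j, hj, hjeq⟩ := ih A v hAlen hAnd hvA
      refine ⟨j + 1, ?_, ?_⟩
      · rw [hctree, BTree.LMP]; omega
      · rw [hsplit, hjeq, hctree, cutL]
    · -- v < min : v is new root
      have hsplit : ctreeL (v :: l) = .node (ctreeL []) (ctreeL l) :=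
        ctreeL_split (l1 := []) (by simp)
          (fun b hb => lt_of_lt_of_le hgt (listMin_le hne b hb))
      exact ⟨0, Nat.zero_le _, by rw [hsplit, ctreeL_nil]; rfl⟩
/-- Canonical sequence realizing a tree, with values 0,…,size−1. -/
def canon : BTree → List ℤ
  | .nil => []
  | .node l r => (canon l).map (· + 1) ++ (0:ℤ) :: (canon r).map (· + ((l.size : ℤ) + 1))

lemma canon_length (T : BTree) : (canon T).length = T.size := by
  induction T with
  | nil => rfl
  | node l r ihl ihr => simp [canon, BTree.size, ihl, ihr]; omega

lemma canon_bounds (T : BTree) : ∀ v ∈ canon T, 0 ≤ v ∧ v < T.size := by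
  induction T with
  | nil => simp [canon]
  | node l r ihl ihr =>
    intro v hv
    rw [canon, BTree.size] at *
    rcases List.mem_append.1 hv with h | h
    · obtain ⟨w, hw, rfl⟩ := List.mem_map.1 h
      have := ihl w hw
      constructor <;> [omega; · push_cast; omega]
    · rcases List.mem_cons.1 h with rfl | h
      · constructor <;> [omega; · push_cast; omega]
      · obtain ⟨w, hw, rfl⟩ := List.mem_map.1 h
        have := ihr w hw
        constructor <;> [omega; · push_cast; omega]

lemma canon_nodup (T : BTree) : (canon T).Nodup := by
  induction T with
  | nil => exact List.nodup_nil
  | node l r ihl ihr =>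
    rw [canon, List.nodup_append]
    refine ⟨ihl.map (fun a b h => by omega), ?_, ?_⟩
    · rw [List.nodup_cons]
      refine ⟨?_, ihr.map (fun a b h => by omega)⟩
      intro h
      obtain ⟨w, hw, hweq⟩ := List.mem_map.1 h
      have := canon_bounds r w hw
      omega
    · intro a ha b hb
      obtain ⟨w, hw, rfl⟩ := List.mem_map.1 ha
      have hwb := canon_bounds l w hw
      rcases List.mem_cons.1 hb with hb | hb
      · omega
      · obtain ⟨u, hu, hueq⟩ := List.mem_map.1 hb

        have := canon_bounds r u hu
        omega

lemma ctreeL_canon (T : BTree) : ctreeL (canon T) = T := by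
  induction T with
  | nil => rfl
  | node l r ihl ihr =>
    rw [canon, ctreeL_split, ctreeL_map (f := (· + 1)) (fun a b h => by dsimp only; omega),
        ctreeL_map (f := (· + ((l.size : ℤ) + 1))) (fun a b h => by dsimp only; omega), ihl, ihr]
    · intro b hb
      obtain ⟨w, hw, rfl⟩ := List.mem_map.1 hb
      have := canon_bounds l w hw
      omega
    · intro b hb
      obtain ⟨w, hw, rfl⟩ := List.mem_map.1 hb
      have := canon_bounds r w hw
      omega
section SeqList
variable {x : ℕ → ℤ} {m k i : ℕ}

lemma seqList_length (x : ℕ → ℤ) (a b : ℕ) : (seqList x a b).length = b + 1 - a := by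
  simp [seqList]

lemma seqList_getElem (x : ℕ → ℤ) (a b i : ℕ) (h : i < b + 1 - a) :
    (seqList x a b)[i]'(by rw [seqList_length]; exact h) = x (a + i) := by
  simp [seqList]

lemma seqList_mem {a b : ℕ} {v : ℤ} (h : v ∈ seqList x a b) :
    ∃ j, a ≤ j ∧ j ≤ b ∧ v = x j := by
  obtain ⟨i, hi, rfl⟩ := List.mem_map.1 h
  rw [List.mem_range] at hi
  exact ⟨a + i, by omega, by omega, rfl⟩

lemma seqList_mem_of {a b j : ℕ} (h1 : a ≤ j) (h2 : j ≤ b) : x j ∈ seqList x a b := by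
  rw [seqList]
  exact List.mem_map.2 ⟨j - a, List.mem_range.2 (by omega), by congr 1; omega⟩

lemma seqList_nodup (hinj : Set.InjOn x (Set.Icc 1 m)) : (seqList x 1 m).Nodup := by
  rw [seqList]
  refine List.Nodup.map_on ?_ (List.nodup_range (n := m))
  intro i hi j hj hij
  rw [List.mem_range] at hi hj
  have := hinj (Set.mem_Icc.2 ⟨by omega, by omega⟩) (Set.mem_Icc.2 ⟨by omega, by omega⟩) hij
  omega

lemma seqList_congr {a b : ℕ} {y : ℕ → ℤ} (h : ∀ j, a ≤ j → j ≤ b → x j = y j) :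
    seqList x a b = seqList y a b := by
  rw [seqList, seqList]
  refine List.map_congr_left ?_
  intro i hi
  rw [List.mem_range] at hi
  exact h _ (by omega) (by omega)

lemma seqList_decomp (x : ℕ → ℤ) (hk : 2 ≤ k) (hkm : k ≤ m) :
    seqList x 1 m = seqList x 1 (k-2) ++ x (k-1) :: x k :: seqList x (k+1) m := by
  refine List.ext_getElem ?_ ?_
  · simp only [List.length_append, List.length_cons, seqList_length]; omega
  · intro i h1 h2
    rw [seqList_getElem x 1 m i (by rw [seqList_length] at h1; exact h1)]
    rcases Nat.lt_or_ge i (k-2) with hc | hc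
    · rw [List.getElem_append_left (by rw [seqList_length]; omega)]
      rw [seqList_getElem x 1 (k-2) i (by omega)]
    · rw [List.getElem_append_right (by rw [seqList_length]; omega)]
      rcases Nat.lt_or_ge i (k-1) with hc2 | hc2
      · have : i - (seqList x 1 (k-2)).length = 0 := by rw [seqList_length]; omega
        simp only [this, List.getElem_cons_zero]
        congr 1; omega
      · rcases Nat.lt_or_ge i k with hc3 | hc3
        · have : i - (seqList x 1 (k-2)).length = 1 := by rw [seqList_length]; omega
          simp only [this, List.getElem_cons_succ, List.getElem_cons_zero]
          congr 1; omega
        · have h4 : i - (seqList x 1 (k-2)).length = (i - k + 1) + 1 := by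
            rw [seqList_length]; omega
          simp only [h4, List.getElem_cons_succ]
          rw [seqList_getElem x (k+1) m (i - k) (by simp only [seqList_length, List.length_append, List.length_cons] at h2; omega)]
          congr 1; omega

lemma seqList_swapAt (x : ℕ → ℤ) (hk : 2 ≤ k) (hkm : k ≤ m) :
    seqList (swapAt x (k-1)) 1 m
      = seqList x 1 (k-2) ++ x k :: x (k-1) :: seqList x (k+1) m := by
  have hd := seqList_decomp (swapAt x (k-1)) hk hkm
  rw [hd]
  have e1 : swapAt x (k-1) (k-1) = x k := by
    rw [swapAt]; rw [if_pos rfl]; congr 1; omega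
  have e2 : swapAt x (k-1) k = x (k-1) := by
    rw [swapAt]; rw [if_neg (by omega), if_pos (by omega)]
  rw [e1, e2]
  congr 1
  · exact seqList_congr (fun j hj1 hj2 => by rw [swapAt, if_neg (by omega), if_neg (by omega)])
  · congr 2
    exact seqList_congr (fun j hj1 hj2 => by rw [swapAt, if_neg (by omega), if_neg (by omega)])

lemma swapAt_injOn (hinj : Set.InjOn x (Set.Icc 1 m)) (hi1 : 1 ≤ i) (hi2 : i + 1 ≤ m) :
    Set.InjOn (swapAt x i) (Set.Icc 1 m) := by
  intro a ha b hb h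
  simp only [Set.mem_Icc] at ha hb
  have key : ∀ u w, 1 ≤ u → u ≤ m → 1 ≤ w → w ≤ m → x u = x w → u = w :=
    fun u w h1 h2 h3 h4 hh =>
      hinj (Set.mem_Icc.2 ⟨h1, h2⟩) (Set.mem_Icc.2 ⟨h3, h4⟩) hh
  unfold swapAt at h
  split_ifs at h with h1 h2 h3 h4 h5 <;>
    first
      | omega
      | (have := key _ _ (by omega) (by omega) (by omega) (by omega) h; omega)

lemma seqList_reverse (x : ℕ → ℤ) (m : ℕ) :
    seqList (fun i => x (m + 1 - i)) 1 m = (seqList x 1 m).reverse := by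
  refine List.ext_getElem ?_ ?_
  · simp [seqList_length]
  · intro i h1 h2
    rw [seqList_getElem _ 1 m i (by rw [seqList_length] at h1; exact h1)]
    rw [List.getElem_reverse]
    rw [seqList_getElem x 1 m _ (by simp only [seqList_length, List.length_reverse] at h2 ⊢; omega)]
    congr 1
    simp only [seqList_length, List.length_reverse] at h2 ⊢
    omega

lemma seqList_getD (l : List ℤ) (hlen : l.length = m) :
    seqList (fun i => l.getD (i-1) 0) 1 m = l := by
  refine List.ext_getElem (by simp [seqList_length, hlen]) ?_
  intro i h1 h2
  rw [seqList_getElem _ 1 m i (by rw [seqList_length] at h1; exact h1)]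
  show l.getD (1 + i - 1) 0 = l[i]
  rw [show 1 + i - 1 = i by omega, List.getD_eq_getElem l 0 (by omega)]

lemma injOn_getD (l : List ℤ) (hlen : l.length = m) (hnd : l.Nodup) :
    Set.InjOn (fun i => l.getD (i-1) 0) (Set.Icc 1 m) := by
  intro a ha b hb h
  simp only [Set.mem_Icc] at ha hb
  have h' : l[a-1]'(by omega) = l[b-1]'(by omega) := by
    rw [← List.getD_eq_getElem l 0 (by omega), ← List.getD_eq_getElem l 0 (by omega)]
    exact h
  have := (List.Nodup.getElem_inj_iff hnd).1 h'
  omega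

end SeqList
section Realize

lemma le_absSum {S : Finset ℤ} {s : ℤ} (hs : s ∈ S) : s ≤ S.sum (fun t => |t|) :=
  le_trans (le_abs_self s)
    (Finset.single_le_sum (f := fun t => |t|) (fun _ _ => abs_nonneg _) hs)

lemma neg_absSum_le {S : Finset ℤ} {s : ℤ} (hs : s ∈ S) : -(S.sum (fun t => |t|)) ≤ s := by
  have h1 : |s| ≤ S.sum (fun t => |t|) :=
    Finset.single_le_sum (f := fun t => |t|) (fun _ _ => abs_nonneg _) hs
  have := neg_abs_le s
  omega

lemma absSum_nonneg (S : Finset ℤ) : 0 ≤ S.sum (fun t => |t|) :=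
  Finset.sum_nonneg (fun _ _ => abs_nonneg _)

lemma cutL_realize : ∀ (j : ℕ) (R : BTree) (v : ℤ) (D : Finset ℤ), Even v → j ≤ R.LMP →
    ∃ w : List ℤ, w.Nodup ∧ (∀ u ∈ w, Odd u) ∧ (∀ u ∈ w, u ∉ D) ∧
      ctreeL w = R ∧ ctreeL (v :: w) = cutL j R ∧ w.length = R.size := by
  intro j
  induction j with
  | zero =>
    intro R v D hv _
    set Q : ℤ := |v| + 1 + (D.sum (fun t => |t|)) with hQ
    have hQv : v < Q := by have := le_abs_self v; have := absSum_nonneg D; omega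
    have hQD : ∀ d ∈ D, d < Q := by
      intro d hd; have := le_absSum hd; have h2 := abs_nonneg v
      have h3 : |d| ≤ D.sum (fun t => |t|) :=
        Finset.single_le_sum (f := fun t => |t|) (fun _ _ => abs_nonneg _) hd
      have := le_abs_self d; omega
    set c : ℤ := 2 * Q + 1 with hc
    have hmono : StrictMono (fun t : ℤ => 2 * t + c) := fun a b h => by dsimp only; omega
    refine ⟨(canon R).map (fun t => 2 * t + c), (canon_nodup R).map hmono.injective, ?_, ?_, ?_, ?_, ?_⟩
    · intro u hu
      obtain ⟨t, ht, rfl⟩ := List.mem_map.1 hu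
      exact ⟨t + Q, by omega⟩
    · intro u hu hud
      obtain ⟨t, ht, rfl⟩ := List.mem_map.1 hu
      have := canon_bounds R t ht
      have := hQD _ hud
      have := abs_nonneg v
      have := absSum_nonneg D
      omega
    · rw [ctreeL_map hmono, ctreeL_canon]
    · have : ctreeL (v :: (canon R).map (fun t => 2 * t + c)) =
          .node (ctreeL ([] : List ℤ)) (ctreeL ((canon R).map (fun t => 2 * t + c))) := by
        refine ctreeL_split (l1 := []) (by simp) ?_
        intro b hb
        obtain ⟨t, ht, rfl⟩ := List.mem_map.1 hb
        have := canon_bounds R t ht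
        have := abs_nonneg v
        have := absSum_nonneg D
        omega
      rw [this, ctreeL_nil, ctreeL_map hmono, ctreeL_canon, cutL]
    · rw [List.length_map, canon_length]
  | succ j ih =>
    intro R v D hv hj
    cases R with
    | nil => rw [BTree.LMP] at hj; omega
    | node A B =>
      rw [BTree.LMP] at hj
      obtain ⟨wA, hAnd, hAodd, hAD, hActree, hAcut, hAlen⟩ := ih A v D hv (by omega)
      -- choose a : odd, below everything relevant
      set S : Finset ℤ := insert v (D ∪ wA.toFinset) with hS
      set P : ℤ := S.sum (fun t => |t|) with hP
      have hPn : 0 ≤ P := absSum_nonneg S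
      set a : ℤ := -(2 * P + 3) with ha
      have haS : ∀ s ∈ S, a < s := by
        intro s hs; have := neg_absSum_le hs; omega
      have hav : a < v := haS v (by simp [hS])
      have haD : a ∉ D := fun h => absurd (haS a (by simp [hS, h])) (lt_irrefl a)
      have hawA : ∀ u ∈ wA, a < u := fun u hu => haS u (by simp [hS, hu])
      have haodd : Odd a := ⟨-P - 2, by omega⟩
      -- choose c : odd, above everything relevant
      set S' : Finset ℤ := insert a S with hS'
      set Q : ℤ := 1 + S'.sum (fun t => |t|) with hQ
      have hQS : ∀ s ∈ S', s < Q := by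
        intro s hs; have := le_absSum hs; have := absSum_nonneg S'; omega
      set c : ℤ := 2 * Q + 1 with hc
      have hcS : ∀ s ∈ S', s < c := by
        intro s hs
        have := hQS s hs
        have : 0 ≤ S'.sum (fun t => |t|) := absSum_nonneg S'
        omega
      have hmono : StrictMono (fun t : ℤ => 2 * t + c) := fun p q h => by dsimp only; omega
      set wB : List ℤ := (canon B).map (fun t => 2 * t + c) with hwB
      have hwBge : ∀ u ∈ wB, c ≤ u := by
        intro u hu
        obtain ⟨t, ht, rfl⟩ := List.mem_map.1 hu
        have := canon_bounds B t ht
        omega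
      have hwBS : ∀ u ∈ wB, ∀ s ∈ S', s < u := fun u hu s hs => lt_of_lt_of_le (hcS s hs) (hwBge u hu)
      have hwBnd : wB.Nodup := (canon_nodup B).map hmono.injective
      have hwBctree : ctreeL wB = B := by rw [hwB, ctreeL_map hmono, ctreeL_canon]
      have hwBodd : ∀ u ∈ wB, Odd u := by
        intro u hu
        obtain ⟨t, ht, rfl⟩ := List.mem_map.1 hu
        exact ⟨t + Q, by omega⟩
      refine ⟨wA ++ a :: wB, ?_, ?_, ?_, ?_, ?_, ?_⟩
      · rw [List.nodup_append]
        refine ⟨hAnd, ?_, ?_⟩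
        · rw [List.nodup_cons]
          exact ⟨fun h => absurd (hwBS a h a (by simp [hS'])) (lt_irrefl a), hwBnd⟩
        · intro u hu u' hu2
          rcases List.mem_cons.1 hu2 with heq | hu3
          · have := hawA u hu; omega
          · have := hwBS u' hu3 u (by simp [hS', hS, hu]); omega
      · intro u hu
        rcases List.mem_append.1 hu with h | h
        · exact hAodd u h
        · rcases List.mem_cons.1 h with rfl | h
          · exact haodd
          · exact hwBodd u h
      · intro u hu hud
        rcases List.mem_append.1 hu with h | h
        · exact hAD u h hud
        · rcases List.mem_cons.1 h with rfl | h
          · exact haD hud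
          · exact absurd (hwBS u h u (by simp [hS', hS, Or.inl hud])) (lt_irrefl u)
      · rw [ctreeL_split hawA (fun b hb => hwBS b hb a (by simp [hS'])) , hActree, hwBctree]
      · rw [show v :: (wA ++ a :: wB) = (v :: wA) ++ a :: wB from rfl]
        rw [ctreeL_split ?_ (fun b hb => hwBS b hb a (by simp [hS']))]
        · rw [hAcut, hwBctree, cutL]
        · intro b hb
          rcases List.mem_cons.1 hb with rfl | hb
          · exact hav
          · exact hawA b hb
      · simp only [List.length_append, List.length_cons, hAlen, List.length_map, canon_length, hwB]
        rw [BTree.size]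
        omega

end Realize
lemma ngi_eq (m k : ℕ) (L R : BTree)
    (hsize : (BTree.node L R).size = m) (hL : L.size = k - 1)
    (hk : 2 ≤ k) (hkm : k + 1 ≤ m) :
    ngi m (BTree.node L R) (k - 1)
      = (fun j => BTree.node L.delLast (cutL j R)) '' (Set.Iic R.LMP) := by
  have hRsize : R.size = m - k := by rw [BTree.size] at hsize; omega
  ext S
  constructor
  · rintro ⟨hi1, hi2, x, hinj, hct, hSeq⟩
    set l := seqList x 1 m with hl
    have hlen : l.length = m := by rw [hl, seqList_length]; omega
    have hnd : l.Nodup := seqList_nodup hinj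
    have hlne : l ≠ [] := by intro h; rw [h] at hlen; simp at hlen; omega
    set A := seqList x 1 (k-2) with hA
    set B := seqList x (k+1) m with hB
    have hAlen : A.length = k - 2 := by rw [hA, seqList_length]; omega
    have hdec : l = A ++ x (k-1) :: x k :: B := seqList_decomp x hk (by omega)
    have hctl : ctreeL l = BTree.node L R := hct
    -- locate the minimum
    have hnode := ctreeL_eq_node hlne
    rw [hctl] at hnode
    have hLeq : L = ctreeL (l.take (minIdx l)) := (BTree.node.inj hnode).1
    have hReq : R = ctreeL (l.drop (minIdx l + 1)) := (BTree.node.inj hnode).2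
    have hglt : minIdx l < m := hlen ▸ minIdx_lt_length hlne
    have hgval : minIdx l = k - 1 := by
      have h1 : (l.take (minIdx l)).length = minIdx l := by
        rw [List.length_take]; omega
      have := size_ctreeL' (l.take (minIdx l))
      rw [← hLeq, hL, h1] at this
      omega
    have htake : l.take (k-1) = A ++ [x (k-1)] := by
      rw [hdec, show k - 1 = A.length + 1 by omega, List.take_length_add_append]
      rfl
    have hdrop : l.drop k = B := by
      rw [hdec, show k = A.length + 2 by omega, List.drop_length_add_append]
      rfl
    have hLval : L = ctreeL (A ++ [x (k-1)]) := by rw [hLeq, hgval, htake]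
    have hRval : R = ctreeL B := by
      rw [hReq, hgval, show k - 1 + 1 = k by omega, hdrop]
    have hminval : listMin l = x k := by
      rw [← minIdx_getElem hlne]
      have hl2 : l[minIdx l]'(minIdx_lt_length hlne) = l[k-1]'(by omega) := by
        simp only [hgval]
      rw [hl2]
      show (seqList x 1 m)[k-1]'(by rw [seqList_length]; omega) = x k
      rw [seqList_getElem x 1 m (k-1) (by omega)]
      congr 1; omega
    have hlt_take : ∀ b ∈ l.take (k-1), x k < b := by
      intro b hb
      have := min_lt_of_mem_take hnd hlne b (by rw [hgval]; exact hb)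
      rwa [hminval] at this
    have hlt_drop : ∀ b ∈ B, x k < b := by
      intro b hb
      have := min_lt_of_mem_drop hnd hlne b
        (by rw [hgval, show k - 1 + 1 = k by omega, hdrop]; exact hb)
      rwa [hminval] at this
    -- the swapped sequence
    have hswap : seqList (swapAt x (k-1)) 1 m = A ++ x k :: x (k-1) :: B :=
      seqList_swapAt x hk (by omega)
    have hsplit : ctreeL (A ++ x k :: x (k-1) :: B)
        = BTree.node (ctreeL A) (ctreeL (x (k-1) :: B)) := by
      refine ctreeL_split ?_ ?_
      · intro b hb
        exact hlt_take b (htake ▸ List.mem_append_left _ hb)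
      · intro b hb
        rcases List.mem_cons.1 hb with rfl | hb
        · exact hlt_take _ (htake ▸ List.mem_append_right _ (by simp))
        · exact hlt_drop b hb
    -- left part is delLast L
    have hAval : ctreeL A = L.delLast := by
      have h1 : A = (l.take (k-1)).dropLast := by rw [htake, List.dropLast_concat]
      have h2 : (l.take (k-1)).Nodup := hnd.sublist (List.take_sublist _ _)
      have h3 : l.take (k-1) ≠ [] := by
        intro h
        have := congrArg List.length h
        rw [List.length_take, List.length_nil] at this
        omega
      rw [h1, ctreeL_dropLast h2 h3, htake, ← hLval]
    -- right part is a cut of R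
    have hBnd : B.Nodup := by
      rw [← hdrop]; exact hnd.sublist (List.drop_sublist _ _)
    have hvB : x (k-1) ∉ B := by
      intro hmem
      have hv_take : x (k-1) ∈ l.take (k-1) := htake ▸ List.mem_append_right _ (by simp)
      have hdec2 : l = l.take (k-1) ++ l.drop (k-1) := (List.take_append_drop _ _).symm
      have hnd2 := hdec2 ▸ hnd
      have hdisj := (List.nodup_append.1 hnd2).2.2
      have hBsub : B ⊆ l.drop (k-1) := by
        have hdd : List.drop k l = List.drop 1 (List.drop (k-1) l) := by
          rw [List.drop_drop]; congr 1; omega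
        rw [← hdrop, hdd]
        exact List.drop_subset _ _
      exact hdisj _ hv_take _ (hBsub hmem) rfl
    obtain ⟨j, hj, hjeq⟩ := cutL_exists_aux B.length B (x (k-1)) le_rfl hBnd hvB
    rw [← hRval] at hj hjeq
    refine ⟨j, Set.mem_Iic.2 hj, ?_⟩
    rw [hSeq]
    show BTree.node L.delLast (cutL j R) = ctreeL (seqList (swapAt x (k-1)) 1 m)
    rw [hswap, hsplit, hAval, hjeq]
  · rintro ⟨j, hj, rfl⟩
    rw [Set.mem_Iic] at hj
    -- construct a witness sequence
    have hmono2 : StrictMono (fun t : ℤ => 2 * t) := fun p q h => by dsimp only; omega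
    set left : List ℤ := (canon L).map (fun t => 2 * t) with hleft
    have hleftlen : left.length = k - 1 := by rw [hleft, List.length_map, canon_length, hL]
    have hleftne : left ≠ [] := by
      intro h; rw [h] at hleftlen; simp at hleftlen; omega
    have hleftnd : left.Nodup := (canon_nodup L).map hmono2.injective
    have hleftct : ctreeL left = L := by rw [hleft, ctreeL_map hmono2, ctreeL_canon]
    have hlefteven : ∀ u ∈ left, Even u := by
      intro u hu
      obtain ⟨t, ht, rfl⟩ := List.mem_map.1 hu
      exact ⟨t, by omega⟩
    set v : ℤ := left.getLast hleftne with hv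
    have hvmem : v ∈ left := List.getLast_mem hleftne
    obtain ⟨w, hwnd, hwodd, hwD, hwctree, hwcut, hwlen⟩ :=
      cutL_realize j R v left.toFinset (hlefteven v hvmem) hj
    -- a very small even value for the root
    set F : Finset ℤ := left.toFinset ∪ w.toFinset with hF
    set xk : ℤ := -(2 * F.sum (fun t => |t|) + 2) with hxk
    have hxklt : ∀ s ∈ F, xk < s := by
      intro s hs
      have := neg_absSum_le hs
      have := absSum_nonneg F
      omega
    have hxkleft : ∀ u ∈ left, xk < u := fun u hu => hxklt u (by simp [hF, hu])
    have hxkw : ∀ u ∈ w, xk < u := fun u hu => hxklt u (by simp [hF, hu])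
    set l0 : List ℤ := left ++ xk :: w with hl0
    have hl0len : l0.length = m := by
      rw [hl0, List.length_append, List.length_cons, hleftlen, hwlen, hRsize]; omega
    have hl0nd : l0.Nodup := by
      rw [hl0, List.nodup_append]
      refine ⟨hleftnd, ?_, ?_⟩
      · rw [List.nodup_cons]
        exact ⟨fun h => absurd (hxkw _ h) (lt_irrefl xk), hwnd⟩
      · intro u hu u' hu2
        rcases List.mem_cons.1 hu2 with heq | hu3
        · have := hxkleft u hu; omega
        · intro h; exact hwD u' hu3 (List.mem_toFinset.2 (h ▸ hu))
    set x : ℕ → ℤ := fun i => l0.getD (i-1) 0 with hx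
    have hseq : seqList x 1 m = l0 := seqList_getD l0 hl0len
    have hinj : Set.InjOn x (Set.Icc 1 m) := injOn_getD l0 hl0len hl0nd
    refine ⟨by omega, by omega, x, hinj, ?_, ?_⟩
    · show ctreeL (seqList x 1 m) = BTree.node L R
      rw [hseq, hl0, ctreeL_split hxkleft hxkw, hleftct, hwctree]
    · -- identify the pieces of the sequence
      have hdec : seqList x 1 m = seqList x 1 (k-2) ++ x (k-1) :: x k :: seqList x (k+1) m :=
        seqList_decomp x hk (by omega)
      have hl0' : l0 = left.dropLast ++ v :: xk :: w := by
        rw [hl0]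
        conv_lhs => rw [← List.dropLast_append_getLast hleftne, ← hv]
        simp
      have hlensplit : (seqList x 1 (k-2)).length = left.dropLast.length := by
        rw [seqList_length, List.length_dropLast, hleftlen]; omega
      have hpieces := List.append_inj (hdec.symm.trans (hseq.trans hl0')) hlensplit
      obtain ⟨hp1, hp2⟩ := hpieces
      have hq1 : x (k-1) = v := (List.cons.inj hp2).1
      have hp3 := (List.cons.inj hp2).2
      have hq2 : x k = xk := (List.cons.inj hp3).1
      have hq3 : seqList x (k+1) m = w := (List.cons.inj hp3).2
      have hswap : seqList (swapAt x (k-1)) 1 m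
          = left.dropLast ++ xk :: v :: w := by
        rw [seqList_swapAt x hk (by omega), hp1, hq1, hq2, hq3]
      show BTree.node L.delLast (cutL j R) = ctreeL (seqList (swapAt x (k-1)) 1 m)
      rw [hswap, ctreeL_split
            (fun b hb => hxkleft b (List.dropLast_subset _ hb))
            (by intro b hb
                rcases List.mem_cons.1 hb with rfl | hb
                · exact hxkleft _ hvmem
                · exact hxkw b hb),
          ctreeL_dropLast hleftnd hleftne, hleftct, hwcut]

lemma claimA (m k : ℕ) (L R : BTree)
    (hsize : (BTree.node L R).size = m) (hL : L.size = k - 1)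
    (hk : 2 ≤ k) (hkm : k + 1 ≤ m) :
    (ngi m (BTree.node L R) (k - 1)).ncard = R.LMP + 1 := by
  rw [ngi_eq m k L R hsize hL hk hkm]
  rw [Set.ncard_image_of_injOn]
  · rw [← Finset.coe_Iic, Set.ncard_coe_finset, Nat.card_Iic]
  · intro j1 h1 j2 h2 heq
    rw [Set.mem_Iic] at h1 h2
    have : cutL j1 R = cutL j2 R := (BTree.node.inj heq).2
    have := congrArg BTree.LMP this
    rw [LMP_cutL j1 R h1, LMP_cutL j2 R h2] at this
    omega
lemma swapAt_rev (x : ℕ → ℤ) (m i j : ℕ) (hi1 : 1 ≤ i) (hi2 : i + 1 ≤ m)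
    (hj1 : 1 ≤ j) (hj2 : j ≤ m) :
    swapAt (fun t => x (m + 1 - t)) (m - i) j = swapAt x i (m + 1 - j) := by
  simp only [swapAt]
  split_ifs <;> first | rfl | (congr 1; omega) | (exfalso; omega)

lemma mem_ngi_mirror {m i : ℕ} {T S : BTree} (h : S ∈ ngi m T i) :
    S.mirror ∈ ngi m T.mirror (m - i) := by
  obtain ⟨hi1, hi2, x, hinj, hct, hSeq⟩ := h
  refine ⟨by omega, by omega, fun t => x (m + 1 - t), ?_, ?_, ?_⟩
  · intro a ha b hb hab
    simp only [Set.mem_Icc] at ha hb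
    have := hinj (Set.mem_Icc.2 (by omega : 1 ≤ m + 1 - a ∧ m + 1 - a ≤ m))
      (Set.mem_Icc.2 (by omega : 1 ≤ m + 1 - b ∧ m + 1 - b ≤ m)) hab
    omega
  · show ctreeL (seqList (fun t => x (m + 1 - t)) 1 m) = T.mirror
    rw [seqList_reverse, ctreeL_reverse (seqList_nodup hinj)]
    rw [show ctreeL (seqList x 1 m) = T from hct]
  · show S.mirror = ctreeL (seqList (swapAt (fun t => x (m + 1 - t)) (m - i)) 1 m)
    have h1 : seqList (swapAt (fun t => x (m + 1 - t)) (m - i)) 1 m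
        = seqList (fun t => swapAt x i (m + 1 - t)) 1 m :=
      seqList_congr (fun j hj1 hj2 => swapAt_rev x m i j hi1 hi2 hj1 hj2)
    rw [h1, seqList_reverse (swapAt x i) m,
        ctreeL_reverse (seqList_nodup (swapAt_injOn hinj hi1 hi2))]
    rw [show ctreeL (seqList (swapAt x i) 1 m) = S from hSeq.symm]

lemma ngi_mirror_eq {m i : ℕ} (T : BTree) (him : i ≤ m) :
    ngi m T i = BTree.mirror '' ngi m T.mirror (m - i) := by
  ext S
  constructor
  · intro h
    exact ⟨S.mirror, mem_ngi_mirror h, BTree.mirror_mirror S⟩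
  · rintro ⟨S', hS', rfl⟩
    have := mem_ngi_mirror hS'
    rw [BTree.mirror_mirror, show m - (m - i) = i by
      obtain ⟨h1, h2, _⟩ := hS'; omega] at this
    exact this
theorem stmt9 (m k : ℕ) (L R : BTree)
    (hsize : (BTree.node L R).size = m) (hL : L.size = k - 1)
    (hk : 2 ≤ k) (hkm : k + 1 ≤ m) :
    (ngi m (BTree.node L R) (k - 1)).ncard = BTree.LMP R + 1 ∧
    (ngi m (BTree.node L R) k).ncard = BTree.RMP L + 1 := by
  have hRsize : R.size = m - k := by rw [BTree.size] at hsize; omega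
  constructor
  · exact claimA m k L R hsize hL hk hkm
  · rw [ngi_mirror_eq (BTree.node L R) (by omega : k ≤ m),
        Set.ncard_image_of_injective _ BTree.mirror_injective]
    have h := claimA m (m - k + 1) R.mirror L.mirror
      (by rw [BTree.size, BTree.size_mirror, BTree.size_mirror]
          rw [BTree.size] at hsize; omega)
      (by rw [BTree.size_mirror]; omega)
      (by omega) (by omega)
    rw [show m - k + 1 - 1 = m - k by omega] at h
    rw [show (BTree.node L R).mirror = BTree.node R.mirror L.mirror from rfl, h,
        BTree.LMP_mirror]
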